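/- Let B be a real 2×2 matrix with J := det B > 0, a ∈ ℝ², and F(x) := Bx + a. Let τ̂ : ℝ² → 𝕊 and v̂ : ℝ² → ℝ² be continuously differentiable, let τ be the re-scaled contravariant Piola–Kirchhoff transform of τ̂ (determined by J²·τ(F(x)) = B τ̂(x) Bᵀ) and v the re-scaled covariant Piola transform of v̂ (determined by v(F(x)) = J·B⁻ᵀ v̂(x)). Then for every compact measurable set T̂ ⊂ ℝ², writing T := F(T̂), the pairings are conserved: ∫_T (div τ)(y)·v(y) dy = ∫_{T̂} (div τ̂)(x)·v̂(x) dx and ∫_T τ(y) : ε(v)(y) dy = ∫_{T̂} τ̂(x) : ε(v̂)(x) dx (Lebesgue integrals on ℝ²). -/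

import Mathlib

set_option maxHeartbeats 2000000

open MeasureTheory Matrix

noncomputable section

/-- Row-wise divergence of a matrix field: `(div τ)_k = ∂₁ τ_{k1} + ∂₂ τ_{k2}`. -/
def matDiv (τ : (Fin 2 → ℝ) → Matrix (Fin 2) (Fin 2) ℝ) (y : Fin 2 → ℝ) : Fin 2 → ℝ :=
  fun k => ∑ j : Fin 2, fderiv ℝ (fun z => τ z k j) y (Pi.single j 1)

/-- Jacobian matrix of a vector field `w : ℝ² → ℝ²`. -/
def jac (w : (Fin 2 → ℝ) → Fin 2 → ℝ) (y : Fin 2 → ℝ) : Matrix (Fin 2) (Fin 2) ℝ :=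
  Matrix.of fun k j => fderiv ℝ (fun z => w z k) y (Pi.single j 1)

/-- Symmetric gradient (strain) `ε(w) = (Dw + Dwᵀ)/2` of a vector field. -/
def symGrad (w : (Fin 2 → ℝ) → Fin 2 → ℝ) (y : Fin 2 → ℝ) : Matrix (Fin 2) (Fin 2) ℝ :=
  (1 / 2 : ℝ) • (jac w y + (jac w y)ᵀ)

/-- Frobenius inner product of two 2×2 matrices. -/
def frobM (A C : Matrix (Fin 2) (Fin 2) ℝ) : ℝ :=
  ∑ k : Fin 2, ∑ l : Fin 2, A k l * C k l

lemma clm_eval (φ : (Fin 2 → ℝ) →L[ℝ] ℝ) (u : Fin 2 → ℝ) :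
    φ u = ∑ r : Fin 2, u r * φ (Pi.single r 1) := by
  have hu : u = ∑ r : Fin 2, u r • (Pi.single r 1 : Fin 2 → ℝ) := by
    simp [← Pi.single_smul, Finset.univ_sum_single]
  conv_lhs => rw [hu]
  simp [smul_eq_mul]

lemma pd_affine (g : (Fin 2 → ℝ) → ℝ) (hg : Differentiable ℝ g)
    (M : Matrix (Fin 2) (Fin 2) ℝ) (c x u : Fin 2 → ℝ) :
    fderiv ℝ (fun z => g (M.mulVec z + c)) x u
      = fderiv ℝ g (M.mulVec x + c) (M.mulVec u) := by
  have hA : HasFDerivAt (fun z : Fin 2 → ℝ => M.mulVec z + c)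
      (LinearMap.toContinuousLinearMap (Matrix.mulVecLin M)) x := by
    simpa using
      ((LinearMap.toContinuousLinearMap (Matrix.mulVecLin M)).hasFDerivAt (x := x)).add_const c
  have hcomp : HasFDerivAt (fun z => g (M.mulVec z + c))
      ((fderiv ℝ g (M.mulVec x + c)).comp
        (LinearMap.toContinuousLinearMap (Matrix.mulVecLin M))) x :=
    (hg (M.mulVec x + c)).hasFDerivAt.comp x hA
  rw [hcomp.fderiv]
  simp

lemma fderiv_sum1 (C : Fin 2 → ℝ) (h : Fin 2 → (Fin 2 → ℝ) → ℝ) (x u : Fin 2 → ℝ)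
    (hd : ∀ p, Differentiable ℝ (h p)) :
    fderiv ℝ (fun w => ∑ p : Fin 2, C p * h p w) x u
      = ∑ p : Fin 2, C p * fderiv ℝ (h p) x u := by
  rw [fderiv_fun_sum (fun p _ => ((hd p) x).const_mul _)]
  simp only [ContinuousLinearMap.sum_apply]
  refine Finset.sum_congr rfl fun p _ => ?_
  rw [fderiv_const_mul ((hd p) x)]
  simp

lemma fderiv_sum2 (C : Fin 2 → Fin 2 → ℝ) (h : Fin 2 → Fin 2 → (Fin 2 → ℝ) → ℝ)
    (x u : Fin 2 → ℝ) (hd : ∀ p q, Differentiable ℝ (h p q)) :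
    fderiv ℝ (fun w => ∑ p : Fin 2, ∑ q : Fin 2, C p q * h p q w) x u
      = ∑ p : Fin 2, ∑ q : Fin 2, C p q * fderiv ℝ (h p q) x u := by
  have h1 : ∀ p : Fin 2, DifferentiableAt ℝ (fun w => ∑ q : Fin 2, C p q * h p q w) x :=
    fun p => DifferentiableAt.fun_sum fun q _ => ((hd p q) x).const_mul _
  rw [fderiv_fun_sum (fun p _ => h1 p)]
  simp only [ContinuousLinearMap.sum_apply]
  exact Finset.sum_congr rfl fun p _ => fderiv_sum1 (C p) (h p) x u (hd p)

/-- Conservation of the duality pairings under the re-scaled contravariant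
Piola–Kirchhoff transform of stresses and the re-scaled covariant Piola transform of
displacements: `∫_T (div τ)·v = ∫_{T̂} (div τ̂)·v̂` and `∫_T τ : ε(v) = ∫_{T̂} τ̂ : ε(v̂)`. -/
theorem piola_pairing_conservation
    (B : Matrix (Fin 2) (Fin 2) ℝ) (hJ : 0 < B.det) (a : Fin 2 → ℝ)
    (τhat τ : (Fin 2 → ℝ) → Matrix (Fin 2) (Fin 2) ℝ)
    (vhat v : (Fin 2 → ℝ) → Fin 2 → ℝ)
    (hsym : ∀ y, (τhat y)ᵀ = τhat y)
    (hτreg : ∀ k l : Fin 2, ContDiff ℝ 1 fun y => τhat y k l)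
    (hvreg : ContDiff ℝ 1 vhat)
    (hτ : ∀ y, (B.det ^ 2) • τ (B.mulVec y + a) = B * τhat y * Bᵀ)
    (hv : ∀ y, v (B.mulVec y + a) = B.det • (B⁻¹)ᵀ.mulVec (vhat y))
    (That : Set (Fin 2 → ℝ)) (hcomp : IsCompact That) (hmeas : MeasurableSet That) :
    ((∫ y in (fun z => B.mulVec z + a) '' That, matDiv τ y ⬝ᵥ v y) =
      ∫ z in That, matDiv τhat z ⬝ᵥ vhat z) ∧
    ((∫ y in (fun z => B.mulVec z + a) '' That, frobM (τ y) (symGrad v y)) =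
      ∫ z in That, frobM (τhat z) (symGrad vhat z)) := by
  have hJ0 : B.det ≠ 0 := ne_of_gt hJ
  have hU : IsUnit B.det := isUnit_iff_ne_zero.2 hJ0
  have hBB : B * B⁻¹ = 1 := Matrix.mul_nonsing_inv B hU
  have hBB' : B⁻¹ * B = 1 := Matrix.nonsing_inv_mul B hU
  have hGF : ∀ x : Fin 2 → ℝ,
      B⁻¹.mulVec (B.mulVec x + a) + B⁻¹.mulVec (-a) = x := by
    intro x
    simp only [Matrix.mulVec_add, Matrix.mulVec_mulVec, hBB', Matrix.one_mulVec,
      Matrix.mulVec_neg]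
    abel
  have hFG : ∀ y : Fin 2 → ℝ,
      B.mulVec (B⁻¹.mulVec y + B⁻¹.mulVec (-a)) + a = y := by
    intro y
    simp only [Matrix.mulVec_add, Matrix.mulVec_mulVec, hBB, Matrix.one_mulVec,
      Matrix.mulVec_neg]
    abel
  have hτ' : ∀ y, τ y
      = (B.det ^ 2)⁻¹ • (B * τhat (B⁻¹.mulVec y + B⁻¹.mulVec (-a)) * Bᵀ) := by
    intro y
    have h := hτ (B⁻¹.mulVec y + B⁻¹.mulVec (-a))
    rw [hFG y] at h
    rw [← h, smul_smul, inv_mul_cancel₀ (pow_ne_zero 2 hJ0), one_smul]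
  have hv' : ∀ y, v y = B.det • (B⁻¹)ᵀ.mulVec (vhat (B⁻¹.mulVec y + B⁻¹.mulVec (-a))) := by
    intro y
    have h := hv (B⁻¹.mulVec y + B⁻¹.mulVec (-a))
    rw [hFG y] at h
    exact h
  have hdτ : ∀ p q, Differentiable ℝ (fun w => τhat w p q) :=
    fun p q => (hτreg p q).differentiable one_ne_zero
  have hdv : ∀ p, Differentiable ℝ (fun w => vhat w p) :=
    fun p => ((contDiff_pi.1 hvreg p).differentiable one_ne_zero)
  -- entry formulas
  have hτentry : ∀ k l : Fin 2, (fun z => τ z k l)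
      = fun z => ∑ p : Fin 2, ∑ q : Fin 2, ((B.det ^ 2)⁻¹ * (B k p * B l q)) *
          τhat (B⁻¹.mulVec z + B⁻¹.mulVec (-a)) p q := by
    intro k l
    funext z
    rw [hτ' z]
    simp only [Matrix.smul_apply, Matrix.mul_apply, Matrix.transpose_apply, smul_eq_mul,
      Finset.sum_mul, Finset.mul_sum]
    rw [Finset.sum_comm]
    exact Finset.sum_congr rfl fun p _ => Finset.sum_congr rfl fun q _ => by ring
  have hventry : ∀ k : Fin 2, (fun z => v z k)
      = fun z => ∑ p : Fin 2, (B.det * B⁻¹ p k) *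
          vhat (B⁻¹.mulVec z + B⁻¹.mulVec (-a)) p := by
    intro k
    funext z
    rw [hv' z]
    simp only [Pi.smul_apply, Matrix.mulVec, dotProduct, Matrix.transpose_apply, smul_eq_mul,
      Finset.mul_sum]
    exact Finset.sum_congr rfl fun p _ => by ring
  -- partial derivatives of the transformed fields
  have hpdτ : ∀ (k l j : Fin 2) (x : Fin 2 → ℝ),
      fderiv ℝ (fun z => τ z k l) (B.mulVec x + a) (Pi.single j 1)
        = ∑ p : Fin 2, ∑ q : Fin 2, ((B.det ^ 2)⁻¹ * (B k p * B l q)) *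
            (∑ r : Fin 2, B⁻¹ r j * fderiv ℝ (fun w => τhat w p q) x (Pi.single r 1)) := by
    intro k l j x
    rw [hτentry k l]
    have hg : Differentiable ℝ (fun w => ∑ p : Fin 2, ∑ q : Fin 2,
        ((B.det ^ 2)⁻¹ * (B k p * B l q)) * τhat w p q) :=
      Differentiable.fun_sum fun p _ => Differentiable.fun_sum fun q _ => (hdτ p q).const_mul _
    refine Eq.trans (pd_affine (fun w => ∑ p : Fin 2, ∑ q : Fin 2,
        ((B.det ^ 2)⁻¹ * (B k p * B l q)) * τhat w p q) hg B⁻¹ (B⁻¹.mulVec (-a))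
        (B.mulVec x + a) (Pi.single j 1)) ?_
    rw [hGF x]
    refine Eq.trans (fderiv_sum2 (fun p q => (B.det ^ 2)⁻¹ * (B k p * B l q))
        (fun p q w => τhat w p q) x _ hdτ) ?_
    refine Finset.sum_congr rfl fun p _ => Finset.sum_congr rfl fun q _ => ?_
    congr 1
    rw [clm_eval (fderiv ℝ (fun w => τhat w p q) x) (B⁻¹.mulVec (Pi.single j 1))]
    refine Finset.sum_congr rfl fun r _ => ?_
    simp [Matrix.mulVec_single]
  have hpdv : ∀ (k j : Fin 2) (x : Fin 2 → ℝ),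
      fderiv ℝ (fun z => v z k) (B.mulVec x + a) (Pi.single j 1)
        = ∑ p : Fin 2, (B.det * B⁻¹ p k) *
            (∑ r : Fin 2, B⁻¹ r j * fderiv ℝ (fun w => vhat w p) x (Pi.single r 1)) := by
    intro k j x
    rw [hventry k]
    have hg : Differentiable ℝ (fun w => ∑ p : Fin 2, (B.det * B⁻¹ p k) * vhat w p) :=
      Differentiable.fun_sum fun p _ => (hdv p).const_mul _
    refine Eq.trans (pd_affine (fun w => ∑ p : Fin 2, (B.det * B⁻¹ p k) * vhat w p) hg
        B⁻¹ (B⁻¹.mulVec (-a)) (B.mulVec x + a) (Pi.single j 1)) ?_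
    rw [hGF x]
    refine Eq.trans (fderiv_sum1 (fun p => B.det * B⁻¹ p k)
        (fun p w => vhat w p) x _ hdv) ?_
    refine Finset.sum_congr rfl fun p _ => ?_
    congr 1
    rw [clm_eval (fderiv ℝ (fun w => vhat w p) x) (B⁻¹.mulVec (Pi.single j 1))]
    refine Finset.sum_congr rfl fun r _ => ?_
    simp [Matrix.mulVec_single]
  -- explicit inverse
  have hd2 : B 0 0 * B 1 1 - B 0 1 * B 1 0 ≠ 0 := by
    rw [← Matrix.det_fin_two]; exact hJ0
  have hBinv : B⁻¹ = (B.det)⁻¹ • !![B 1 1, -B 0 1; -B 1 0, B 0 0] := by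
    rw [Matrix.inv_def, Matrix.adjugate_fin_two, Ring.inverse_eq_inv']
  -- pointwise identities
  have P1 : ∀ x : Fin 2 → ℝ,
      |B.det| • (matDiv τ (B.mulVec x + a) ⬝ᵥ v (B.mulVec x + a))
        = matDiv τhat x ⬝ᵥ vhat x := by
    intro x
    rw [abs_of_pos hJ]
    simp only [matDiv, dotProduct, Fin.sum_univ_two, smul_eq_mul]
    rw [hpdτ 0 0 0 x, hpdτ 0 1 1 x, hpdτ 1 0 0 x, hpdτ 1 1 1 x, hv x, hBinv,
      Matrix.det_fin_two]
    simp only [Fin.sum_univ_two, Matrix.mulVec, dotProduct, Matrix.transpose_apply,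
      Matrix.smul_apply, Pi.smul_apply, smul_eq_mul, Matrix.cons_val', Matrix.cons_val_zero,
      Matrix.cons_val_one, Matrix.head_cons, Matrix.head_fin_const, Matrix.empty_val',
      Matrix.cons_val_fin_one, Matrix.of_apply]
    field_simp
    ring
  have P2 : ∀ x : Fin 2 → ℝ,
      |B.det| • frobM (τ (B.mulVec x + a)) (symGrad v (B.mulVec x + a))
        = frobM (τhat x) (symGrad vhat x) := by
    intro x
    rw [abs_of_pos hJ]
    have hτx : τ (B.mulVec x + a) = (B.det ^ 2)⁻¹ • (B * τhat x * Bᵀ) := by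
      rw [← hτ x, smul_smul, inv_mul_cancel₀ (pow_ne_zero 2 hJ0), one_smul]
    rw [hτx]
    simp only [frobM, symGrad, jac, Matrix.smul_apply, Matrix.add_apply,
      Matrix.transpose_apply, Matrix.of_apply, smul_eq_mul, Fin.sum_univ_two,
      Matrix.mul_apply]
    rw [hpdv 0 0 x, hpdv 0 1 x, hpdv 1 0 x, hpdv 1 1 x, hBinv, Matrix.det_fin_two]
    simp only [Fin.sum_univ_two, Matrix.smul_apply, smul_eq_mul, Matrix.cons_val',
      Matrix.cons_val_zero, Matrix.cons_val_one, Matrix.head_cons, Matrix.head_fin_const,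
      Matrix.empty_val', Matrix.cons_val_fin_one, Matrix.of_apply]
    field_simp
    ring
  -- change of variables
  have hF' : ∀ x, HasFDerivAt (fun z => B.mulVec z + a)
      (LinearMap.toContinuousLinearMap (Matrix.mulVecLin B)) x := by
    intro x
    simpa using
      ((LinearMap.toContinuousLinearMap (Matrix.mulVecLin B)).hasFDerivAt (x := x)).add_const a
  have hdet' : (LinearMap.toContinuousLinearMap (Matrix.mulVecLin B)).det = B.det := by
    rw [ContinuousLinearMap.det, LinearMap.coe_toContinuousLinearMap, ← Matrix.toLin'_apply',
      LinearMap.det_toLin']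
  have hinj : Function.Injective (fun z => B.mulVec z + a) := by
    intro z w h
    have h2 := congrArg (fun y => B⁻¹.mulVec y + B⁻¹.mulVec (-a)) h
    simp only at h2
    rw [hGF z, hGF w] at h2
    exact h2
  have key : ∀ g : (Fin 2 → ℝ) → ℝ,
      (∫ y in (fun z => B.mulVec z + a) '' That, g y)
        = ∫ x in That, |B.det| • g (B.mulVec x + a) := by
    intro g
    rw [integral_image_eq_integral_abs_det_fderiv_smul volume hmeas
      (fun x _ => (hF' x).hasFDerivWithinAt) (Function.Injective.injOn hinj) g]
    simp_rw [hdet']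
  constructor
  · rw [key fun y => matDiv τ y ⬝ᵥ v y]
    simp only [P1]
  · rw [key fun y => frobM (τ y) (symGrad v y)]
    simp only [P2]
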